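/- Let g : ℝⁿ → ℝ be convex, μ > 0, p ≥ 1. Suppose λ* ≠ 0 is a global minimizer of φ(λ) = g(λ) + (μ/(1+1/p))·‖λ‖^{1+1/p}, let λᵏ ∈ ℝⁿ with λᵏ ≠ 0, and let λᵏ⁺¹ be a global minimizer of λ ↦ g(λ) + (μ/2)·‖λᵏ‖^{(1/p)−1}·‖λ‖². Then (‖λᵏ‖^{1−1/p} − ‖λ*‖^{1−1/p})·(‖λᵏ⁺¹‖² − ‖λ*‖²) ≥ 0. -/

import Mathlib

/-- One step of the fixed point iteration satisfies
`(‖λᵏ‖^{1−1/p} − ‖λ*‖^{1−1/p})(‖λᵏ⁺¹‖² − ‖λ*‖²) ≥ 0`. -/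
theorem fixed_point_iteration_norm_sq_monotone
    (n : ℕ) (g : EuclideanSpace ℝ (Fin n) → ℝ)
    (hg : ConvexOn ℝ Set.univ g) (μ p : ℝ) (hμ : 0 < μ) (hp : 1 ≤ p)
    (lamstar : EuclideanSpace ℝ (Fin n)) (hstar0 : lamstar ≠ 0)
    (hstar : ∀ z : EuclideanSpace ℝ (Fin n),
      g lamstar + μ / (1 + 1 / p) * ‖lamstar‖ ^ (1 + 1 / p) ≤
        g z + μ / (1 + 1 / p) * ‖z‖ ^ (1 + 1 / p))
    (lamk lamk1 : EuclideanSpace ℝ (Fin n)) (hk : lamk ≠ 0)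
    (hmin : ∀ z : EuclideanSpace ℝ (Fin n),
      g lamk1 + μ / 2 * ‖lamk‖ ^ (1 / p - 1) * ‖lamk1‖ ^ 2 ≤
        g z + μ / 2 * ‖lamk‖ ^ (1 / p - 1) * ‖z‖ ^ 2) :
    (‖lamk‖ ^ (1 - 1 / p) - ‖lamstar‖ ^ (1 - 1 / p)) * (‖lamk1‖ ^ 2 - ‖lamstar‖ ^ 2) ≥ 0 := by
  have hp0 : (0:ℝ) < p := lt_of_lt_of_le one_pos hp
  have hip : 0 < 1 / p := by positivity
  have hip1 : 1 / p ≤ 1 := by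
    rw [div_le_one hp0]; exact hp
  set a : ℝ := ‖lamk‖ with ha_def
  set s : ℝ := ‖lamstar‖ with hs_def
  set t : ℝ := ‖lamk1‖ with ht_def
  have ha : 0 < a := norm_pos_iff.mpr hk
  have hs : 0 < s := norm_pos_iff.mpr hstar0
  have ht : 0 ≤ t := norm_nonneg _
  set α : ℝ := 1 - 1 / p with hα_def
  set q : ℝ := 1 + 1 / p with hq_def
  have hα0 : 0 ≤ α := by simp only [hα_def]; linarith
  have hq0 : 0 < q := by simp only [hq_def]; linarith
  have hq2 : q ≤ 2 := by simp only [hq_def]; linarith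
  -- abbreviations
  set A : ℝ := s ^ α with hA_def
  set B : ℝ := s ^ (-α) with hB_def
  set C : ℝ := s ^ q with hC_def
  set D : ℝ := a ^ (-α) with hD_def
  set E : ℝ := a ^ α with hE_def
  have hA : 0 < A := Real.rpow_pos_of_pos hs _
  have hB : 0 < B := Real.rpow_pos_of_pos hs _
  have hC : 0 < C := Real.rpow_pos_of_pos hs _
  have hD : 0 < D := Real.rpow_pos_of_pos ha _
  have hE : 0 < E := Real.rpow_pos_of_pos ha _
  have hAB : A * B = 1 := by
    rw [hA_def, hB_def, ← Real.rpow_add hs]; simp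
  have hED : E * D = 1 := by
    rw [hE_def, hD_def, ← Real.rpow_add ha]; simp
  have hAC : A * C = s ^ 2 := by
    rw [hA_def, hC_def, ← Real.rpow_add hs]
    have : α + q = 2 := by simp [hα_def, hq_def]; ring
    rw [this]
    norm_num [Real.rpow_two]
  -- minimality of lamk1 applied at lamstar, with D = a ^ (1/p - 1)
  have hD' : (‖lamk‖ : ℝ) ^ (1 / p - 1) = D := by
    rw [hD_def, hα_def]; norm_num; rfl
  have h1 : g lamk1 + μ / 2 * D * t ^ 2 ≤ g lamstar + μ / 2 * D * s ^ 2 := by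
    have := hmin lamstar; rwa [hD'] at this
  -- minimality of lamstar applied at lamk1
  have h2 : g lamstar + μ / q * C ≤ g lamk1 + μ / q * t ^ q := hstar lamk1
  have hkey : μ / 2 * D * (t ^ 2 - s ^ 2) ≤ μ / q * (t ^ q - C) := by nlinarith
  -- Young's inequality: t^q * A ≤ q/2 * t² + (1 - q/2) * s²
  have hyoung : t ^ q * A ≤ q / 2 * t ^ 2 + (1 - q / 2) * s ^ 2 := by
    have hw1 : (0:ℝ) ≤ q / 2 := by linarith
    have hw2 : (0:ℝ) ≤ 1 - q / 2 := by linarith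
    have h := Real.geom_mean_le_arith_mean2_weighted hw1 hw2 (sq_nonneg t) (sq_nonneg s)
      (by ring)
    have e1 : (t ^ 2 : ℝ) ^ (q / 2) = t ^ q := by
      rw [← Real.rpow_natCast t 2, ← Real.rpow_mul ht]
      congr 1
      ring
    have e2 : (s ^ 2 : ℝ) ^ (1 - q / 2) = A := by
      rw [← Real.rpow_natCast s 2, ← Real.rpow_mul hs.le, hA_def]
      congr 1
      simp [hα_def, hq_def]; ring
    rw [e1, e2] at h
    linarith
  -- hence t^q - C ≤ q/2 * B * (t² - s²)
  have hBs : B * s ^ 2 = C := by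
    linear_combination (-B) * hAC + C * hAB
  have hBtq : B * (t ^ q * A) = t ^ q := by
    linear_combination (t ^ q) * hAB
  have hstep : t ^ q - C ≤ q / 2 * B * (t ^ 2 - s ^ 2) := by
    have h := mul_le_mul_of_nonneg_left hyoung hB.le
    have hRHS : B * (q / 2 * t ^ 2 + (1 - q / 2) * s ^ 2)
        = q / 2 * B * t ^ 2 + (1 - q / 2) * C := by
      linear_combination (1 - q / 2) * hBs
    rw [hBtq, hRHS] at h
    have hX : q / 2 * B * (t ^ 2 - s ^ 2) = q / 2 * B * t ^ 2 - q / 2 * C := by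
      linear_combination (-(q / 2)) * hBs
    linarith [h, hX]
  -- combine: D (t² - s²) ≤ B (t² - s²)
  have hDB : D * (t ^ 2 - s ^ 2) ≤ B * (t ^ 2 - s ^ 2) := by
    have h3 : μ / q * (t ^ q - C) ≤ μ / 2 * B * (t ^ 2 - s ^ 2) := by
      have hmuq : (0:ℝ) ≤ μ / q := le_of_lt (div_pos hμ hq0)
      have h := mul_le_mul_of_nonneg_left hstep hmuq
      have hqne : q ≠ 0 := ne_of_gt hq0
      have hq' : μ / q * (q / 2 * B * (t ^ 2 - s ^ 2)) = μ / 2 * B * (t ^ 2 - s ^ 2) := by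
        field_simp
      linarith [hq', h]
    have h4 : μ / 2 * D * (t ^ 2 - s ^ 2) ≤ μ / 2 * B * (t ^ 2 - s ^ 2) :=
      le_trans hkey h3
    have hμ2 : (0:ℝ) < μ / 2 := by linarith
    rw [mul_assoc, mul_assoc] at h4
    exact (mul_le_mul_iff_right₀ hμ2).mp h4
  -- final sign argument
  have hfin : (E - A) * (t ^ 2 - s ^ 2) = (A * E) * ((B - D) * (t ^ 2 - s ^ 2)) := by
    linear_combination (-(E * (t ^ 2 - s ^ 2))) * hAB + (A * (t ^ 2 - s ^ 2)) * hED
  have hgoal : (E - A) * (t ^ 2 - s ^ 2) ≥ 0 := by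
    rw [hfin]
    have h5 : 0 ≤ (B - D) * (t ^ 2 - s ^ 2) := by
      have : (B - D) * (t ^ 2 - s ^ 2) = B * (t ^ 2 - s ^ 2) - D * (t ^ 2 - s ^ 2) := by ring
      linarith [hDB, this]
    exact mul_nonneg (le_of_lt (mul_pos hA hE)) h5
  exact hgoal
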